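/- Let a, b, c, d, θ₁, θ₂ be independent random variables with a, b, c, d uniform on [−1,1] and θ₁, θ₂ uniform on [0,1]. Then P((a+d−b−c)θ₁ + c − d < 0 or (a+d−b−c)θ₂ + c − d < 0) ≤ 0.6. -/

import Mathlib

open MeasureTheory ProbabilityTheory Set

section StagHuntAux

/-- The uniform measure on `[-1,1]`. -/
noncomputable def shNu : Measure ℝ :=
  (volume (Set.Icc (-1:ℝ) 1))⁻¹ • volume.restrict (Set.Icc (-1:ℝ) 1)

lemma shVolIcc : volume (Set.Icc (-1:ℝ) 1) = ENNReal.ofReal 2 := by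
  rw [Real.volume_Icc]; norm_num

lemma shInv2Mul (u : ℝ) : (ENNReal.ofReal 2)⁻¹ * ENNReal.ofReal u = ENNReal.ofReal (u / 2) := by
  rw [ENNReal.ofReal_div_of_pos (by norm_num), div_eq_mul_inv, mul_comm]

instance : IsProbabilityMeasure shNu := by
  constructor
  rw [shNu, Measure.smul_apply, Measure.restrict_apply MeasurableSet.univ, Set.univ_inter,
    shVolIcc, smul_eq_mul, ENNReal.inv_mul_cancel] <;> simp

lemma shNu_Iic (t : ℝ) : shNu (Set.Iic t) = ENNReal.ofReal ((min t 1 + 1) / 2) := by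
  rw [shNu, Measure.smul_apply, Measure.restrict_apply measurableSet_Iic, shVolIcc, smul_eq_mul]
  have : Set.Iic t ∩ Set.Icc (-1:ℝ) 1 = Set.Icc (-1) (min t 1) := by
    ext x
    simp only [Set.mem_inter_iff, Set.mem_Iic, Set.mem_Icc, le_min_iff]
    tauto
  rw [this, Real.volume_Icc, shInv2Mul]
  norm_num

lemma shNu_lintegral (g : ℝ → ENNReal) :
    ∫⁻ x, g x ∂shNu = (ENNReal.ofReal 2)⁻¹ * ∫⁻ x in Set.Icc (-1:ℝ) 1, g x := by
  rw [shNu, lintegral_smul_measure, shVolIcc, smul_eq_mul]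

lemma shHasDerivAt_maxpow (n : ℕ) (hn : 2 ≤ n) (u : ℝ) :
    HasDerivAt (fun v : ℝ => max v 0 ^ n) ((n : ℝ) * max u 0 ^ (n - 1)) u := by
  rcases lt_trichotomy u 0 with hu | hu | hu
  · have h0 : ((n:ℝ) * max u 0 ^ (n-1)) = 0 := by
      rw [max_eq_right hu.le, zero_pow (by omega), mul_zero]
    rw [h0]
    refine (hasDerivAt_const u (0:ℝ)).congr_of_eventuallyEq ?_
    filter_upwards [Iio_mem_nhds hu] with v hv
    rw [max_eq_right (le_of_lt hv), zero_pow (by omega)]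
  · subst hu
    have h0 : ((n:ℝ) * max 0 0 ^ (n-1)) = 0 := by
      rw [max_self, zero_pow (by omega), mul_zero]
    rw [h0]
    rw [hasDerivAt_iff_isLittleO]
    simp only [sub_zero, max_self, zero_pow (by omega : n ≠ 0), smul_eq_mul, mul_zero, sub_zero,
      zero_mul]
    rw [Asymptotics.isLittleO_iff]
    intro c hc
    have : ∀ᶠ v : ℝ in nhds 0, |v| < min c 1 := by
      have := Metric.ball_mem_nhds (0:ℝ) (lt_min hc one_pos)
      filter_upwards [this] with v hv
      simpa [Real.dist_eq] using hv
    filter_upwards [this] with v hv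
    have h1 : |v| < 1 := lt_of_lt_of_le hv (min_le_right _ _)
    have h2 : |v| < c := lt_of_lt_of_le hv (min_le_left _ _)
    have hm : max v 0 ≤ |v| := by
      rcases le_total v 0 with h | h
      · simp [max_eq_right h, abs_nonneg]
      · simp [max_eq_left h, le_abs_self]
    have hmn : max v 0 ^ n ≤ |v| ^ n := pow_le_pow_left₀ (le_max_right v 0) hm n
    have hvn : |v| ^ n ≤ |v| * |v| := by
      calc |v| ^ n ≤ |v| ^ 2 := pow_le_pow_of_le_one (abs_nonneg v) h1.le hn
      _ = |v| * |v| := sq |v|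
    calc ‖max v 0 ^ n‖ = max v 0 ^ n := by
          rw [Real.norm_eq_abs, abs_of_nonneg (pow_nonneg (le_max_right v 0) n)]
      _ ≤ |v| * |v| := le_trans hmn hvn
      _ ≤ c * ‖v‖ := by rw [Real.norm_eq_abs]; exact mul_le_mul h2.le le_rfl (abs_nonneg v) hc.le
  · refine (hasDerivAt_pow n u).congr_of_eventuallyEq ?_ |>.congr_deriv ?_
    · filter_upwards [Ioi_mem_nhds hu] with v hv
      rw [max_eq_left (le_of_lt hv)]
    · rw [max_eq_left hu.le]

/-- The law of the difference of two independent uniforms on `[-1,1]`. -/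
noncomputable def shTau : Measure ℝ := (shNu.prod shNu).map (fun p => p.1 - p.2)

instance : IsProbabilityMeasure shTau := by
  rw [shTau]; exact Measure.isProbabilityMeasure_map (by fun_prop)

lemma shOfRealMax (x : ℝ) : ENNReal.ofReal (max x 0) = ENNReal.ofReal x := by
  rcases le_total x 0 with h | h
  · rw [max_eq_right h, ENNReal.ofReal_zero, ENNReal.ofReal_of_nonpos h]
  · rw [max_eq_left h]

lemma shTau_Ici {s : ℝ} (hs : 0 ≤ s) :
    shTau (Set.Ici s) = ENNReal.ofReal (max (2 - s) 0 ^ 2 / 8) := by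
  rw [shTau, Measure.map_apply (by fun_prop) measurableSet_Ici]
  have hset : (fun p : ℝ × ℝ => p.1 - p.2) ⁻¹' Set.Ici s = {p : ℝ × ℝ | s ≤ p.1 - p.2} := rfl
  rw [hset]
  have hms : MeasurableSet {p : ℝ × ℝ | s ≤ p.1 - p.2} :=
    measurableSet_le measurable_const (measurable_fst.sub measurable_snd)
  rw [Measure.prod_apply hms]
  have hsec : ∀ x : ℝ, (Prod.mk x ⁻¹' {p : ℝ × ℝ | s ≤ p.1 - p.2}) = Set.Iic (x - s) := by
    intro x; ext y
    simp only [Set.mem_preimage, Set.mem_setOf_eq, Set.mem_Iic]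
    constructor <;> intro h <;> linarith
  simp only [hsec, shNu_Iic]
  rw [shNu_lintegral]
  have hcong : ∀ x ∈ Set.Icc (-1:ℝ) 1,
      ENNReal.ofReal ((min (x - s) 1 + 1) / 2) = ENNReal.ofReal (max (x - s + 1) 0 / 2) := by
    intro x hx
    have hxs : x - s ≤ 1 := by have := hx.2; linarith
    rw [min_eq_left hxs, ← shOfRealMax ((x - s + 1)/2)]
    congr 1
    rcases le_total (x - s + 1) 0 with h | h
    · rw [max_eq_right h, max_eq_right (by linarith : (x - s + 1)/2 ≤ 0)]; norm_num
    · rw [max_eq_left h, max_eq_left (by linarith : (0:ℝ) ≤ (x - s + 1)/2)]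
  rw [setLIntegral_congr_fun measurableSet_Icc hcong]
  have hcont : Continuous (fun x : ℝ => max (x - s + 1) 0 / 2) := by
    apply Continuous.div_const
    exact (continuous_id.sub continuous_const |>.add continuous_const).max continuous_const
  rw [← ofReal_integral_eq_lintegral_ofReal (hcont.integrableOn_Icc)
    (ae_of_all _ (fun x => by positivity))]
  have : ∫ x in Set.Icc (-1:ℝ) 1, max (x - s + 1) 0 / 2 = max (2 - s) 0 ^ 2 / 4 := by
    rw [MeasureTheory.integral_Icc_eq_integral_Ioc,
      ← intervalIntegral.integral_of_le (by norm_num : (-1:ℝ) ≤ 1)]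
    have hderiv : ∀ x ∈ Set.uIcc (-1:ℝ) 1, HasDerivAt (fun x : ℝ => max (x - s + 1) 0 ^ 2 / 4)
        (max (x - s + 1) 0 / 2) x := by
      intro x _
      have h1 : HasDerivAt (fun x : ℝ => x - s + 1) 1 x := by
        simpa using (hasDerivAt_id x).sub_const s |>.add_const 1
      have h2 := (shHasDerivAt_maxpow 2 le_rfl (x - s + 1)).comp x h1
      have h3 := h2.div_const 4
      refine h3.congr_deriv ?_
      norm_num; ring
    rw [intervalIntegral.integral_eq_sub_of_hasDerivAt hderiv
      ((hcont.intervalIntegrable _ _))]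
    have e1 : max (-1 - s + 1) 0 = 0 := by
      rw [max_eq_right]; linarith
    rw [e1]
    have e2 : (1:ℝ) - s + 1 = 2 - s := by ring
    rw [e2]
    ring
  rw [this, shInv2Mul, div_div]
  norm_num

/-- closed form for the tail probability of the ratio event. -/
noncomputable def shPval (k : ℝ) : ℝ := (16 - (16 - max (2 - 2*k) 0 ^ 4) / (4*k)) / (96*k)

lemma shTau_prod_tail {k : ℝ} (hk : 0 < k) :
    (shTau.prod shTau) {p : ℝ × ℝ | k * p.1 ≤ p.2 ∧ 0 < p.1} = ENNReal.ofReal (shPval k) := by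
  have hS : MeasurableSet {p : ℝ × ℝ | k * p.1 ≤ p.2 ∧ 0 < p.1} := by
    apply MeasurableSet.inter
    · exact measurableSet_le (measurable_const.mul measurable_fst) measurable_snd
    · exact measurableSet_lt measurable_const measurable_fst
  rw [Measure.prod_apply hS]
  set f : ℝ → ENNReal :=
    (Set.Ioi (0:ℝ)).indicator (fun w => ENNReal.ofReal (max (2 - k*w) 0 ^ 2 / 8)) with hf
  have hsec : ∀ w : ℝ, shTau (Prod.mk w ⁻¹' {p : ℝ × ℝ | k * p.1 ≤ p.2 ∧ 0 < p.1}) = f w := by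
    intro w
    rcases lt_or_ge 0 w with hw | hw
    · have : Prod.mk w ⁻¹' {p : ℝ × ℝ | k * p.1 ≤ p.2 ∧ 0 < p.1} = Set.Ici (k * w) := by
        ext x; simp [Set.mem_Ici, hw]
      rw [this, shTau_Ici (by positivity), hf, Set.indicator_of_mem (Set.mem_Ioi.2 hw)]
    · have : Prod.mk w ⁻¹' {p : ℝ × ℝ | k * p.1 ≤ p.2 ∧ 0 < p.1} = ∅ := by
        ext x; simp only [Set.mem_preimage, Set.mem_setOf_eq, Set.mem_empty_iff_false, iff_false]
        intro h; exact absurd h.2 (not_lt.2 hw)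
      rw [this, measure_empty, hf, Set.indicator_of_notMem (by simpa using hw)]
  rw [lintegral_congr hsec]
  have hfm : Measurable f := by
    apply Measurable.indicator _ measurableSet_Ioi
    apply ENNReal.measurable_ofReal.comp
    fun_prop
  rw [shTau, lintegral_map hfm (by fun_prop)]
  rw [lintegral_prod _ (by exact (hfm.comp (by fun_prop)).aemeasurable)]
  rw [shNu_lintegral]
  have hinner : ∀ x ∈ Set.Icc (-1:ℝ) 1,
      (∫⁻ y, f (x - y) ∂shNu) = ENNReal.ofReal ((8 - max (2 - k*(x+1)) 0 ^ 3) / (48*k)) := by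
    intro x hx
    rw [shNu_lintegral]
    have hind : ∀ y : ℝ, f (x - y) =
        (Set.Iio x).indicator (fun y => ENNReal.ofReal (max (2 - k*(x-y)) 0 ^ 2 / 8)) y := by
      intro y
      rw [hf]
      rcases lt_or_ge y x with h | h
      · rw [Set.indicator_of_mem (by simpa using sub_pos.2 h),
          Set.indicator_of_mem (Set.mem_Iio.2 h)]
      · rw [Set.indicator_of_notMem (by simpa using sub_nonpos.2 h),
          Set.indicator_of_notMem (by simpa using h)]
    simp only [hind]
    rw [lintegral_indicator measurableSet_Iio, Measure.restrict_restrict measurableSet_Iio]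
    have hIio : Set.Iio x ∩ Set.Icc (-1:ℝ) 1 = Set.Ico (-1) x := by
      ext y
      simp only [Set.mem_inter_iff, Set.mem_Iio, Set.mem_Icc, Set.mem_Ico]
      constructor
      · rintro ⟨h1, h2, _⟩; exact ⟨h2, h1⟩
      · rintro ⟨h1, h2⟩; exact ⟨h2, h1, le_trans h2.le hx.2⟩
    rw [hIio, Measure.restrict_congr_set Ico_ae_eq_Icc]
    have hcont : Continuous (fun y : ℝ => max (2 - k*(x-y)) 0 ^ 2 / 8) := by fun_prop
    rw [← ofReal_integral_eq_lintegral_ofReal (hcont.integrableOn_Icc)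
      (ae_of_all _ (fun y => by positivity))]
    have hval : ∫ y in Set.Icc (-1:ℝ) x, max (2 - k*(x-y)) 0 ^ 2 / 8
        = (8 - max (2 - k*(x+1)) 0 ^ 3) / (24*k) := by
      rw [MeasureTheory.integral_Icc_eq_integral_Ioc, ← intervalIntegral.integral_of_le hx.1]
      have hderiv : ∀ y ∈ Set.uIcc (-1:ℝ) x,
          HasDerivAt (fun y : ℝ => max (2 - k*(x-y)) 0 ^ 3 / (24*k))
          (max (2 - k*(x-y)) 0 ^ 2 / 8) y := by
        intro y _
        have h1 : HasDerivAt (fun y : ℝ => 2 - k*(x-y)) k y := by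
          have : HasDerivAt (fun y : ℝ => x - y) (-1) y := by
            simpa using (hasDerivAt_id y).const_sub x
          simpa using ((this.const_mul k).const_sub 2)
        have h2 := ((shHasDerivAt_maxpow 3 (by norm_num) (2 - k*(x-y))).comp y h1).div_const (24*k)
        refine h2.congr_deriv ?_
        field_simp
        ring
      rw [intervalIntegral.integral_eq_sub_of_hasDerivAt hderiv
        ((by fun_prop : Continuous (fun y : ℝ => max (2 - k*(x-y)) 0 ^ 2 / 8)).intervalIntegrable _ _)]
      have e1 : 2 - k*(x - x) = 2 := by ring
      have e2 : 2 - k*(x - (-1)) = 2 - k*(x+1) := by ring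
      rw [e1, e2]
      rw [show max (2:ℝ) 0 = 2 from max_eq_left (by norm_num)]
      ring
    rw [hval, shInv2Mul, div_div]
    congr 1
    ring
  rw [setLIntegral_congr_fun measurableSet_Icc hinner]
  have hcont2 : Continuous (fun x : ℝ => (8 - max (2 - k*(x+1)) 0 ^ 3) / (48*k)) := by fun_prop
  have hnn : ∀ x ∈ Set.Icc (-1:ℝ) 1, 0 ≤ (8 - max (2 - k*(x+1)) 0 ^ 3) / (48*k) := by
    intro x hx
    apply div_nonneg _ (by positivity)
    have h2 : max (2 - k*(x+1)) 0 ≤ 2 := by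
      apply max_le _ (by norm_num)
      nlinarith [hx.1, hk.le]
    have h3 : (max (2 - k*(x+1)) 0)^3 ≤ 2^3 := pow_le_pow_left₀ (le_max_right _ _) h2 3
    norm_num at h3
    linarith
  rw [← ofReal_integral_eq_lintegral_ofReal (hcont2.integrableOn_Icc)
    ((ae_restrict_iff' measurableSet_Icc).2 (ae_of_all _ hnn))]
  have hval2 : ∫ x in Set.Icc (-1:ℝ) 1, (8 - max (2 - k*(x+1)) 0 ^ 3) / (48*k)
      = (16 - (16 - max (2 - 2*k) 0 ^ 4) / (4*k)) / (48*k) := by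
    rw [MeasureTheory.integral_Icc_eq_integral_Ioc,
      ← intervalIntegral.integral_of_le (by norm_num : (-1:ℝ) ≤ 1)]
    have hderiv : ∀ x ∈ Set.uIcc (-1:ℝ) 1, HasDerivAt
        (fun x : ℝ => (8*x + max (2 - k*(x+1)) 0 ^ 4 / (4*k)) / (48*k))
        ((8 - max (2 - k*(x+1)) 0 ^ 3) / (48*k)) x := by
      intro x _
      have h1 : HasDerivAt (fun x : ℝ => 2 - k*(x+1)) (-k) x := by
        have : HasDerivAt (fun x : ℝ => x + 1) 1 x := by simpa using (hasDerivAt_id x).add_const 1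
        simpa using ((this.const_mul k).const_sub 2)
      have h2 := ((shHasDerivAt_maxpow 4 (by norm_num) (2 - k*(x+1))).comp x h1).div_const (4*k)
      have h3 : HasDerivAt (fun x : ℝ => 8*x) 8 x := by simpa using (hasDerivAt_id x).const_mul 8
      have h4 := (h3.add h2).div_const (48*k)
      refine h4.congr_deriv ?_
      field_simp
      ring
    rw [intervalIntegral.integral_eq_sub_of_hasDerivAt hderiv (hcont2.intervalIntegrable _ _)]
    have e1 : 2 - k*((1:ℝ)+1) = 2 - 2*k := by ring
    have e2 : 2 - k*((-1:ℝ)+1) = 2 := by ring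
    rw [e1, e2, show max (2:ℝ) 0 = 2 from max_eq_left (by norm_num)]
    have : (2:ℝ)^4 = 16 := by norm_num
    rw [this]
    field_simp
    ring
  rw [hval2, shInv2Mul, shPval, div_div]
  congr 1
  ring

lemma shTau_Ici_zero : shTau (Set.Ici (0:ℝ)) = ENNReal.ofReal (1/2) := by
  rw [shTau_Ici le_rfl]
  norm_num

lemma shTau_Iio_zero : shTau (Set.Iio (0:ℝ)) = ENNReal.ofReal (1/2) := by
  have h := measure_compl (measurableSet_Ici : MeasurableSet (Set.Ici (0:ℝ)))
    (measure_ne_top shTau _)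
  rw [Set.compl_Ici] at h
  rw [h, shTau_Ici_zero, measure_univ, ← ENNReal.ofReal_one,
    ← ENNReal.ofReal_sub _ (by norm_num)]
  norm_num

/-- discretization levels -/
noncomputable def shK (j : ℕ) : ℝ := (j:ℝ)/(40 - (j:ℝ))
noncomputable def shPv (j : ℕ) : ℝ := if j ≤ 39 then shPval (shK j) else 0
noncomputable def shQ (j : ℕ) : ℝ := (j:ℝ)/40
noncomputable def shS (j : ℕ) : Set (ℝ × ℝ) :=
  if j ≤ 39 then {p | shK j * p.1 ≤ p.2 ∧ 0 < p.1} else ∅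

lemma shS_meas (j : ℕ) : MeasurableSet (shS j) := by
  rw [shS]
  split
  · exact (measurableSet_le (measurable_const.mul measurable_fst) measurable_snd).inter
      (measurableSet_lt measurable_const measurable_fst)
  · exact MeasurableSet.empty

lemma shK_pos {j : ℕ} (h1 : 1 ≤ j) (h39 : j ≤ 39) : 0 < shK j := by
  have c1 : (1:ℝ) ≤ (j:ℝ) := by exact_mod_cast h1
  have c2 : (j:ℝ) ≤ 39 := by exact_mod_cast h39
  rw [shK]
  apply div_pos (by linarith) (by linarith)

lemma shK_mono {i j : ℕ} (hij : i ≤ j) (h39 : j ≤ 39) : shK i ≤ shK j := by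
  have c2 : (i:ℝ) ≤ (j:ℝ) := by exact_mod_cast hij
  have c3 : (j:ℝ) ≤ 39 := by exact_mod_cast h39
  rw [shK, shK, div_le_div_iff₀ (by linarith) (by linarith)]
  nlinarith

lemma shS_succ_sub {j : ℕ} (h1 : 1 ≤ j) : shS (j+1) ⊆ shS j := by
  by_cases h39 : j + 1 ≤ 39
  · rw [shS, shS, if_pos h39, if_pos (by omega)]
    rintro p ⟨hp1, hp2⟩
    refine ⟨le_trans ?_ hp1, hp2⟩
    exact mul_le_mul_of_nonneg_right (shK_mono (Nat.le_succ j) h39) hp2.le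
  · rw [show shS (j+1) = ∅ by rw [shS]; exact if_neg h39]
    exact empty_subset _

lemma shS_le {i j : ℕ} (h1 : 1 ≤ i) (hij : i ≤ j) : shS j ⊆ shS i := by
  induction j, hij using Nat.le_induction with
  | base => exact subset_rfl
  | succ m hm ih => exact (shS_succ_sub (le_trans h1 hm)).trans ih

lemma shMem_S {j : ℕ} {p : ℝ × ℝ} (h : p ∈ shS j) : shK j * p.1 ≤ p.2 ∧ 0 < p.1 := by
  rw [shS] at h
  split at h
  · exact h
  · exact absurd h (Set.notMem_empty p)

lemma shPval_nonneg {k : ℝ} (hk : 0 < k) : 0 ≤ shPval k := by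
  rw [shPval]
  apply div_nonneg _ (by positivity)
  rw [sub_nonneg, div_le_iff₀ (by positivity)]
  rcases le_total k 1 with h | h
  · rw [max_eq_left (by linarith)]
    nlinarith [sq_nonneg (1-k), sq_nonneg ((1-k)^2), sq_nonneg (k*(1-k))]
  · rw [max_eq_right (by linarith)]
    norm_num
    nlinarith

lemma shPv_nonneg {j : ℕ} (h1 : 1 ≤ j) : 0 ≤ shPv j := by
  rw [shPv]
  split
  · exact shPval_nonneg (shK_pos h1 (by omega))
  · exact le_refl 0

lemma shTT_S {j : ℕ} (h1 : 1 ≤ j) : (shTau.prod shTau) (shS j) = ENNReal.ofReal (shPv j) := by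
  rw [shS, shPv]
  split
  · exact shTau_prod_tail (shK_pos h1 (by omega))
  · simp

lemma shTT_band {j : ℕ} (h1 : 1 ≤ j) :
    (shTau.prod shTau) (shS j \ shS (j+1)) = ENNReal.ofReal (shPv j - shPv (j+1)) := by
  rw [measure_diff (shS_succ_sub h1) (shS_meas (j+1)).nullMeasurableSet (measure_ne_top _ _),
    shTT_S h1, shTT_S (by omega), ENNReal.ofReal_sub _ (shPv_nonneg (by omega))]

lemma shTheta_Ici {t : ℝ} (h0 : 0 ≤ t) (h1 : t ≤ 1) :
    (volume.restrict (Set.Icc (0:ℝ) 1)) (Set.Ici t) = ENNReal.ofReal (1 - t) := by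
  rw [Measure.restrict_apply measurableSet_Ici]
  have : Set.Ici t ∩ Set.Icc (0:ℝ) 1 = Set.Icc t 1 := by
    ext x; simp only [mem_inter_iff, mem_Ici, mem_Icc]
    constructor
    · rintro ⟨u, _, w⟩; exact ⟨u, w⟩
    · rintro ⟨u, w⟩; exact ⟨u, le_trans h0 u, w⟩
  rw [this, Real.volume_Icc]

lemma shTheta_Iic {t : ℝ} (h0 : 0 ≤ t) (h1 : t ≤ 1) :
    (volume.restrict (Set.Icc (0:ℝ) 1)) (Set.Iic t) = ENNReal.ofReal t := by
  rw [Measure.restrict_apply measurableSet_Iic]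
  have : Set.Iic t ∩ Set.Icc (0:ℝ) 1 = Set.Icc 0 t := by
    ext x; simp only [mem_inter_iff, mem_Iic, mem_Icc]
    constructor
    · rintro ⟨u, w, _⟩; exact ⟨w, u⟩
    · rintro ⟨u, w⟩; exact ⟨w, u, le_trans w h1⟩
  rw [this, Real.volume_Icc, sub_zero]

lemma shTheta_univ : (volume.restrict (Set.Icc (0:ℝ) 1)) (Set.Icc 0 1) = 1 := by
  rw [Measure.restrict_apply measurableSet_Icc, Set.inter_self, Real.volume_Icc]
  norm_num

lemma shOfReal_sum_le {ι : Type*} (s : Finset ι) (f : ι → ℝ) :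
    ENNReal.ofReal (∑ i ∈ s, f i) ≤ ∑ i ∈ s, ENNReal.ofReal (f i) := by
  induction s using Finset.cons_induction with
  | empty => simp
  | cons i s his ih =>
    rw [Finset.sum_cons, Finset.sum_cons]
    exact le_trans ENNReal.ofReal_add_le (add_le_add le_rfl ih)

lemma shProbEvent {Ω : Type*} [MeasurableSpace Ω] {P : Measure Ω} {F : Ω → ℝ × ℝ}
    {θ₁ θ₂ : Ω → ℝ}
    (hmF : Measurable F) (hm1 : Measurable θ₁) (hm2 : Measurable θ₂)
    (hFG : IndepFun F (fun ω => (θ₁ ω, θ₂ ω)) P)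
    (hθθ : IndepFun θ₁ θ₂ P)
    (hFmap : Measure.map F P = shTau.prod shTau)
    (h1 : Measure.map θ₁ P = volume.restrict (Set.Icc (0:ℝ) 1))
    (h2 : Measure.map θ₂ P = volume.restrict (Set.Icc (0:ℝ) 1))
    {S : Set (ℝ × ℝ)} (hS : MeasurableSet S) {T₁ T₂ : Set ℝ}
    (hT₁ : MeasurableSet T₁) (hT₂ : MeasurableSet T₂) :
    P (F ⁻¹' S ∩ (θ₁ ⁻¹' T₁ ∩ θ₂ ⁻¹' T₂)) =
      (shTau.prod shTau) S * ((volume.restrict (Set.Icc (0:ℝ) 1)) T₁ *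
        (volume.restrict (Set.Icc (0:ℝ) 1)) T₂) := by
  have hpre : θ₁ ⁻¹' T₁ ∩ θ₂ ⁻¹' T₂ = (fun ω => (θ₁ ω, θ₂ ω)) ⁻¹' (T₁ ×ˢ T₂) :=
    (Set.mk_preimage_prod θ₁ θ₂).symm
  rw [hpre, hFG.measure_inter_preimage_eq_mul S (T₁ ×ˢ T₂) hS (hT₁.prod hT₂),
    ← hpre, hθθ.measure_inter_preimage_eq_mul T₁ T₂ hT₁ hT₂]
  rw [← Measure.map_apply hmF hS, hFmap,
    ← Measure.map_apply hm1 hT₁, h1, ← Measure.map_apply hm2 hT₂, h2]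

end StagHuntAux


set_option maxHeartbeats 4000000 in
theorem randomized_staghunt_failure_prob {Ω : Type*} [MeasurableSpace Ω]
    (P : Measure Ω) [IsProbabilityMeasure P]
    (a b c d θ₁ θ₂ : Ω → ℝ)
    (hma : Measurable a) (hmb : Measurable b) (hmc : Measurable c)
    (hmd : Measurable d) (hm1 : Measurable θ₁) (hm2 : Measurable θ₂)
    (hindep : iIndepFun ![a, b, c, d, θ₁, θ₂] P)
    (ha : Measure.map a P = (volume (Set.Icc (-1:ℝ) 1))⁻¹ • volume.restrict (Set.Icc (-1:ℝ) 1))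
    (hb : Measure.map b P = (volume (Set.Icc (-1:ℝ) 1))⁻¹ • volume.restrict (Set.Icc (-1:ℝ) 1))
    (hc : Measure.map c P = (volume (Set.Icc (-1:ℝ) 1))⁻¹ • volume.restrict (Set.Icc (-1:ℝ) 1))
    (hd : Measure.map d P = (volume (Set.Icc (-1:ℝ) 1))⁻¹ • volume.restrict (Set.Icc (-1:ℝ) 1))
    (h1 : Measure.map θ₁ P = volume.restrict (Set.Icc (0:ℝ) 1))
    (h2 : Measure.map θ₂ P = volume.restrict (Set.Icc (0:ℝ) 1)) :
    P {ω | (a ω + d ω - b ω - c ω) * θ₁ ω + c ω - d ω < 0 ∨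
           (a ω + d ω - b ω - c ω) * θ₂ ω + c ω - d ω < 0} ≤
      ENNReal.ofReal 0.6 := by
  classical
  set E : Set Ω := {ω | (a ω + d ω - b ω - c ω) * θ₁ ω + c ω - d ω < 0 ∨
      (a ω + d ω - b ω - c ω) * θ₂ ω + c ω - d ω < 0} with hEdef
  have hf : ∀ i, Measurable (![a, b, c, d, θ₁, θ₂] i) := by
    intro i; fin_cases i <;> simpa
  set F : Ω → ℝ × ℝ := fun ω => (d ω - c ω, a ω - b ω) with hFdef
  set F' : Ω → ℝ × ℝ := fun ω => (b ω - a ω, c ω - d ω) with hF'def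
  have hmF : Measurable F := by rw [hFdef]; fun_prop
  have hmF' : Measurable F' := by rw [hF'def]; fun_prop
  -- laws of differences
  have hmapdiff : ∀ (f g : Ω → ℝ), Measurable f → Measurable g → IndepFun f g P →
      Measure.map f P = shNu → Measure.map g P = shNu →
      Measure.map (fun ω => f ω - g ω) P = shTau := by
    intro f g hmf hmg hfg hf1 hg1
    have hpair : Measure.map (fun ω => (f ω, g ω)) P = shNu.prod shNu := by
      rw [(indepFun_iff_map_prod_eq_prod_map_map hmf.aemeasurable hmg.aemeasurable).1 hfg,
        hf1, hg1]
    rw [show (fun ω => f ω - g ω) = (fun p : ℝ × ℝ => p.1 - p.2) ∘ (fun ω => (f ω, g ω)) from rfl,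
      ← Measure.map_map (by fun_prop) (by fun_prop), hpair, shTau]
  have hWmap : Measure.map (fun ω => d ω - c ω) P = shTau :=
    hmapdiff d c hmd hmc (hindep.indepFun (show (3:Fin 6) ≠ 2 by decide)) hd hc
  have hXmap : Measure.map (fun ω => a ω - b ω) P = shTau :=
    hmapdiff a b hma hmb (hindep.indepFun (show (0:Fin 6) ≠ 1 by decide)) ha hb
  have hVmap : Measure.map (fun ω => b ω - a ω) P = shTau :=
    hmapdiff b a hmb hma (hindep.indepFun (show (1:Fin 6) ≠ 0 by decide)) hb ha
  have hYmap : Measure.map (fun ω => c ω - d ω) P = shTau :=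
    hmapdiff c d hmc hmd (hindep.indepFun (show (2:Fin 6) ≠ 3 by decide)) hc hd
  have hWXI : IndepFun (fun ω => d ω - c ω) (fun ω => a ω - b ω) P :=
    (hindep.indepFun_prodMk_prodMk hf 3 2 0 1 (by decide) (by decide) (by decide)
      (by decide)).comp (measurable_fst.sub measurable_snd) (measurable_fst.sub measurable_snd)
  have hVYI : IndepFun (fun ω => b ω - a ω) (fun ω => c ω - d ω) P :=
    (hindep.indepFun_prodMk_prodMk hf 1 0 2 3 (by decide) (by decide) (by decide)
      (by decide)).comp (measurable_fst.sub measurable_snd) (measurable_fst.sub measurable_snd)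
  have hFmap : Measure.map F P = shTau.prod shTau := by
    rw [hFdef,
      (indepFun_iff_map_prod_eq_prod_map_map (by fun_prop) (by fun_prop)).1 hWXI, hWmap, hXmap]
  have hF'map : Measure.map F' P = shTau.prod shTau := by
    rw [hF'def,
      (indepFun_iff_map_prod_eq_prod_map_map (by fun_prop) (by fun_prop)).1 hVYI, hVmap, hYmap]
  have hgrp := hindep.indepFun_finset {0,1,2,3} {4,5} (by decide) hf
  have hFG : IndepFun F (fun ω => (θ₁ ω, θ₂ ω)) P := by
    have hφ : Measurable (fun v : (∀ _ : ({0,1,2,3} : Finset (Fin 6)), ℝ) =>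
        (v ⟨3, by decide⟩ - v ⟨2, by decide⟩, v ⟨0, by decide⟩ - v ⟨1, by decide⟩)) := by
      fun_prop
    have hψ : Measurable (fun v : (∀ _ : ({4,5} : Finset (Fin 6)), ℝ) =>
        (v ⟨4, by decide⟩, v ⟨5, by decide⟩)) := by fun_prop
    exact hgrp.comp hφ hψ
  have hF'G : IndepFun F' (fun ω => (θ₁ ω, θ₂ ω)) P := by
    have hφ : Measurable (fun v : (∀ _ : ({0,1,2,3} : Finset (Fin 6)), ℝ) =>
        (v ⟨1, by decide⟩ - v ⟨0, by decide⟩, v ⟨2, by decide⟩ - v ⟨3, by decide⟩)) := by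
      fun_prop
    have hψ : Measurable (fun v : (∀ _ : ({4,5} : Finset (Fin 6)), ℝ) =>
        (v ⟨4, by decide⟩, v ⟨5, by decide⟩)) := by fun_prop
    exact hgrp.comp hφ hψ
  have hθθ : IndepFun θ₁ θ₂ P := hindep.indepFun (show (4:Fin 6) ≠ 5 by decide)
  -- events
  set EI : Set Ω := F ⁻¹' (Set.Iio 0 ×ˢ Set.Ici 0) ∩
      (θ₁ ⁻¹' Set.Icc 0 1 ∩ θ₂ ⁻¹' Set.Icc 0 1) with hEIdef
  set EII : ℕ → Set Ω := fun j => F ⁻¹' (shS j \ shS (j+1)) ∩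
      (θ₁ ⁻¹' Set.Ici (1 - shQ j) ∩ θ₂ ⁻¹' Set.Ici (1 - shQ j)) with hEIIdef
  set EIII : ℕ → Set Ω := fun j => F' ⁻¹' (shS j \ shS (j+1)) ∩
      (θ₁ ⁻¹' Set.Iic (shQ j) ∩ θ₂ ⁻¹' Set.Iic (shQ j)) with hEIIIdef
  have hmEI : MeasurableSet EI :=
    (hmF (measurableSet_Iio.prod measurableSet_Ici)).inter
      ((hm1 measurableSet_Icc).inter (hm2 measurableSet_Icc))
  have hmEII : ∀ j, MeasurableSet (EII j) := fun j =>
    (hmF ((shS_meas j).diff (shS_meas (j+1)))).inter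
      ((hm1 measurableSet_Ici).inter (hm2 measurableSet_Ici))
  have hmEIII : ∀ j, MeasurableSet (EIII j) := fun j =>
    (hmF' ((shS_meas j).diff (shS_meas (j+1)))).inter
      ((hm1 measurableSet_Iic).inter (hm2 measurableSet_Iic))
  -- probabilities
  have hPEI : P EI = ENNReal.ofReal (1/4) := by
    rw [hEIdef, shProbEvent hmF hm1 hm2 hFG hθθ hFmap h1 h2
      (measurableSet_Iio.prod measurableSet_Ici) measurableSet_Icc measurableSet_Icc,
      shTheta_univ, Measure.prod_prod, shTau_Iio_zero, shTau_Ici_zero,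
      ← ENNReal.ofReal_mul (by norm_num)]
    norm_num
  have hqbounds : ∀ j : ℕ, j ∈ Finset.Icc 1 39 → 0 ≤ shQ j ∧ shQ j ≤ 1 := by
    intro j hj
    rw [Finset.mem_Icc] at hj
    have c1 : (1:ℝ) ≤ (j:ℝ) := by exact_mod_cast hj.1
    have c2 : (j:ℝ) ≤ 39 := by exact_mod_cast hj.2
    constructor
    · rw [shQ]; positivity
    · rw [shQ, div_le_one (by norm_num)]; linarith
  have hPII : ∀ j ∈ Finset.Icc 1 39,
      P (EII j) = ENNReal.ofReal (shQ j * shQ j * (shPv j - shPv (j+1))) := by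
    intro j hj
    obtain ⟨hq0, hq1⟩ := hqbounds j hj
    rw [Finset.mem_Icc] at hj
    rw [hEIIdef]
    simp only
    rw [shProbEvent hmF hm1 hm2 hFG hθθ hFmap h1 h2
      ((shS_meas j).diff (shS_meas (j+1))) measurableSet_Ici measurableSet_Ici,
      shTT_band hj.1, shTheta_Ici (by linarith) (by linarith),
      show (1:ℝ) - (1 - shQ j) = shQ j by ring,
      ← ENNReal.ofReal_mul hq0, mul_comm, ← ENNReal.ofReal_mul (mul_nonneg hq0 hq0)]
  have hPIII : ∀ j ∈ Finset.Icc 1 39,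
      P (EIII j) = ENNReal.ofReal (shQ j * shQ j * (shPv j - shPv (j+1))) := by
    intro j hj
    obtain ⟨hq0, hq1⟩ := hqbounds j hj
    rw [Finset.mem_Icc] at hj
    rw [hEIIIdef]
    simp only
    rw [shProbEvent hmF' hm1 hm2 hF'G hθθ hF'map h1 h2
      ((shS_meas j).diff (shS_meas (j+1))) measurableSet_Iic measurableSet_Iic,
      shTT_band hj.1, shTheta_Iic hq0 hq1,
      ← ENNReal.ofReal_mul hq0, mul_comm, ← ENNReal.ofReal_mul (mul_nonneg hq0 hq0)]
  -- unions
  set UB : Set Ω := ⋃ j ∈ Finset.Icc 1 39, EII j with hUBdef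
  set UC : Set Ω := ⋃ j ∈ Finset.Icc 1 39, EIII j with hUCdef
  have hmUB : MeasurableSet UB := MeasurableSet.biUnion (Finset.Icc 1 39).countable_toSet
    (fun j _ => hmEII j)
  have hmUC : MeasurableSet UC := MeasurableSet.biUnion (Finset.Icc 1 39).countable_toSet
    (fun j _ => hmEIII j)
  have hbandd : ∀ i j : ℕ, 1 ≤ i → i < j →
      Disjoint (shS i \ shS (i+1)) (shS j \ shS (j+1)) := by
    intro i j hi hij
    refine Set.disjoint_left.2 ?_
    rintro p ⟨_, pni⟩ ⟨pj, _⟩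
    exact absurd (shS_le (by omega) (by omega) pj) pni
  have hdII : (↑(Finset.Icc 1 39) : Set ℕ).PairwiseDisjoint EII := by
    intro i hi j hj hij
    simp only [Finset.coe_Icc, Set.mem_Icc] at hi hj
    rcases lt_or_gt_of_ne hij with h | h
    · exact Disjoint.mono Set.inter_subset_left Set.inter_subset_left
        ((hbandd i j hi.1 h).preimage F)
    · exact (Disjoint.mono Set.inter_subset_left Set.inter_subset_left
        ((hbandd j i hj.1 h).preimage F)).symm
  have hdIII : (↑(Finset.Icc 1 39) : Set ℕ).PairwiseDisjoint EIII := by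
    intro i hi j hj hij
    simp only [Finset.coe_Icc, Set.mem_Icc] at hi hj
    rcases lt_or_gt_of_ne hij with h | h
    · exact Disjoint.mono Set.inter_subset_left Set.inter_subset_left
        ((hbandd i j hi.1 h).preimage F')
    · exact (Disjoint.mono Set.inter_subset_left Set.inter_subset_left
        ((hbandd j i hj.1 h).preimage F')).symm
  have hPUB : P UB = ∑ j ∈ Finset.Icc 1 39, P (EII j) :=
    measure_biUnion_finset hdII (fun j _ => hmEII j)
  have hPUC : P UC = ∑ j ∈ Finset.Icc 1 39, P (EIII j) :=
    measure_biUnion_finset hdIII (fun j _ => hmEIII j)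
  -- cross-disjointness
  have hinUB : ∀ ω ∈ UB, ∃ j, j ∈ Finset.Icc 1 39 ∧ ω ∈ EII j := by
    intro ω hω
    simp only [hUBdef, Set.mem_iUnion, exists_prop] at hω
    exact ⟨hω.choose, hω.choose_spec.1, hω.choose_spec.2⟩
  have hinUC : ∀ ω ∈ UC, ∃ j, j ∈ Finset.Icc 1 39 ∧ ω ∈ EIII j := by
    intro ω hω
    simp only [hUCdef, Set.mem_iUnion, exists_prop] at hω
    exact ⟨hω.choose, hω.choose_spec.1, hω.choose_spec.2⟩
  have hXposII : ∀ ω j, j ∈ Finset.Icc 1 39 → ω ∈ EII j →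
      0 < d ω - c ω ∧ 0 < a ω - b ω ∧ shK j * (d ω - c ω) ≤ a ω - b ω := by
    intro ω j hj hω
    rw [Finset.mem_Icc] at hj
    obtain ⟨hmem, _⟩ := hω
    obtain ⟨hK, hpos⟩ := shMem_S (hmem.1)
    refine ⟨hpos, lt_of_lt_of_le (mul_pos (shK_pos hj.1 hj.2) hpos) hK, hK⟩
  have hVposIII : ∀ ω j, j ∈ Finset.Icc 1 39 → ω ∈ EIII j →
      0 < b ω - a ω ∧ 0 < c ω - d ω ∧ shK j * (b ω - a ω) ≤ c ω - d ω := by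
    intro ω j hj hω
    rw [Finset.mem_Icc] at hj
    obtain ⟨hmem, _⟩ := hω
    obtain ⟨hK, hpos⟩ := shMem_S (hmem.1)
    refine ⟨hpos, lt_of_lt_of_le (mul_pos (shK_pos hj.1 hj.2) hpos) hK, hK⟩
  have hdis_B_C : Disjoint UB UC := by
    refine Set.disjoint_left.2 ?_
    intro ω hωB hωC
    obtain ⟨i, hi, hωi⟩ := hinUB ω hωB
    obtain ⟨j, hj, hωj⟩ := hinUC ω hωC
    have h1' := (hXposII ω i hi hωi).2.1
    have h2' := (hVposIII ω j hj hωj).1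
    linarith
  have hdis_I_B : Disjoint EI UB := by
    refine Set.disjoint_left.2 ?_
    intro ω hωI hωB
    obtain ⟨j, hj, hωj⟩ := hinUB ω hωB
    have h1' := (hXposII ω j hj hωj).1
    have h2' : d ω - c ω < 0 := hωI.1.1
    linarith
  have hdis_I_C : Disjoint EI UC := by
    refine Set.disjoint_left.2 ?_
    intro ω hωI hωC
    obtain ⟨j, hj, hωj⟩ := hinUC ω hωC
    have h1' := (hVposIII ω j hj hωj).1
    have h2' : 0 ≤ a ω - b ω := hωI.1.2
    linarith
  set U : Set Ω := EI ∪ (UB ∪ UC) with hUdef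
  have hmU : MeasurableSet U := hmEI.union (hmUB.union hmUC)
  have hPU : P U = P EI + (P UB + P UC) := by
    rw [hUdef, measure_union (Set.disjoint_union_right.2 ⟨hdis_I_B, hdis_I_C⟩)
      (hmUB.union hmUC), measure_union hdis_B_C hmUC]
  -- numeric lower bound on P U
  have hSigma : ∀ (UU : Set Ω) (EE : ℕ → Set Ω),
      P UU = ∑ j ∈ Finset.Icc 1 39, P (EE j) →
      (∀ j ∈ Finset.Icc 1 39, P (EE j) = ENNReal.ofReal (shQ j * shQ j * (shPv j - shPv (j+1)))) →
      ENNReal.ofReal (∑ j ∈ Finset.Icc 1 39, shQ j * shQ j * (shPv j - shPv (j+1))) ≤ P UU := by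
    intro UU EE hPU hPE
    rw [hPU, Finset.sum_congr rfl hPE]
    exact shOfReal_sum_le _ _
  have hUBge := hSigma UB EII hPUB hPII
  have hUCge := hSigma UC EIII hPUC hPIII
  have hnum : (2/5 : ℝ) ≤ 1/4 + ((∑ j ∈ Finset.Icc 1 39, shQ j * shQ j * (shPv j - shPv (j+1)))
      + (∑ j ∈ Finset.Icc 1 39, shQ j * shQ j * (shPv j - shPv (j+1)))) := by
    rw [show Finset.Icc 1 39 = Finset.range 40 \ {0} by decide]
    rw [Finset.sum_sdiff_eq_sub (by decide)]
    simp only [Finset.sum_range_succ, Finset.sum_range_zero, Finset.sum_singleton]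
    norm_num [shPv, shPval, shK, shQ]
  have hPUge : ENNReal.ofReal (2/5) ≤ P U := by
    rw [hPU, hPEI]
    calc ENNReal.ofReal (2/5)
        ≤ ENNReal.ofReal (1/4 + ((∑ j ∈ Finset.Icc 1 39, shQ j * shQ j * (shPv j - shPv (j+1)))
          + (∑ j ∈ Finset.Icc 1 39, shQ j * shQ j * (shPv j - shPv (j+1))))) :=
          ENNReal.ofReal_le_ofReal hnum
      _ ≤ ENNReal.ofReal (1/4) +
          ENNReal.ofReal ((∑ j ∈ Finset.Icc 1 39, shQ j * shQ j * (shPv j - shPv (j+1)))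
          + (∑ j ∈ Finset.Icc 1 39, shQ j * shQ j * (shPv j - shPv (j+1)))) :=
          ENNReal.ofReal_add_le
      _ ≤ ENNReal.ofReal (1/4) +
          (ENNReal.ofReal (∑ j ∈ Finset.Icc 1 39, shQ j * shQ j * (shPv j - shPv (j+1)))
          + ENNReal.ofReal (∑ j ∈ Finset.Icc 1 39, shQ j * shQ j * (shPv j - shPv (j+1)))) :=
          add_le_add le_rfl ENNReal.ofReal_add_le
      _ ≤ ENNReal.ofReal (1/4) + (P UB + P UC) :=
          add_le_add le_rfl (add_le_add hUBge hUCge)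
  -- U avoids the bad event
  have hgoodI : ∀ (θ : ℝ) (ω : Ω), ω ∈ EI → θ ∈ Set.Icc (0:ℝ) 1 →
      0 ≤ (a ω + d ω - b ω - c ω) * θ + c ω - d ω := by
    intro θ ω hω hθ
    obtain ⟨hθ0, hθ1⟩ := hθ
    have hW : d ω - c ω < 0 := hω.1.1
    have hX : 0 ≤ a ω - b ω := hω.1.2
    nlinarith [mul_nonneg hθ0 hX, mul_nonneg (by linarith : (0:ℝ) ≤ 1 - θ)
      (by linarith : (0:ℝ) ≤ -(d ω - c ω))]
  have hgoodII : ∀ (θ : ℝ) (ω : Ω) (j : ℕ), j ∈ Finset.Icc 1 39 → ω ∈ EII j →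
      1 - shQ j ≤ θ → 0 ≤ (a ω + d ω - b ω - c ω) * θ + c ω - d ω := by
    intro θ ω j hjmem hω hθ
    obtain ⟨hWpos, hXpos, hK⟩ := hXposII ω j hjmem hω
    rw [Finset.mem_Icc] at hjmem
    have c1 : (1:ℝ) ≤ (j:ℝ) := by exact_mod_cast hjmem.1
    have c2 : (j:ℝ) ≤ 39 := by exact_mod_cast hjmem.2
    set W := d ω - c ω
    set X := a ω - b ω
    have hjW : (j:ℝ) * W ≤ (40 - (j:ℝ)) * X := by
      have e : shK j * W = (j:ℝ) * W / (40 - (j:ℝ)) := by rw [shK]; ring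
      have hK' : (j:ℝ) * W / (40 - (j:ℝ)) ≤ X := by rw [← e]; exact hK
      rw [div_le_iff₀ (by linarith)] at hK'
      linarith
    have hθ' : (40 - (j:ℝ))/40 ≤ θ := by
      have : 1 - shQ j = (40 - (j:ℝ))/40 := by rw [shQ]; ring
      linarith [this ▸ hθ]
    have hsum : (0:ℝ) < X + W := by linarith
    have h5 : ((40 - (j:ℝ))/40) * (X + W) ≤ θ * (X + W) :=
      mul_le_mul_of_nonneg_right hθ' hsum.le
    have h6 : W ≤ ((40 - (j:ℝ))/40) * (X + W) := by
      rw [div_mul_eq_mul_div, le_div_iff₀ (by norm_num : (0:ℝ) < 40)]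
      nlinarith [hjW]
    have hrw : (a ω + d ω - b ω - c ω) * θ + c ω - d ω = θ * (X + W) - W := by
      rw [show X = a ω - b ω from rfl, show W = d ω - c ω from rfl]; ring
    rw [hrw]
    linarith
  have hgoodIII : ∀ (θ : ℝ) (ω : Ω) (j : ℕ), j ∈ Finset.Icc 1 39 → ω ∈ EIII j →
      θ ≤ shQ j → 0 ≤ (a ω + d ω - b ω - c ω) * θ + c ω - d ω := by
    intro θ ω j hjmem hω hθ
    obtain ⟨hVpos, hYpos, hK⟩ := hVposIII ω j hjmem hω
    rw [Finset.mem_Icc] at hjmem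
    have c1 : (1:ℝ) ≤ (j:ℝ) := by exact_mod_cast hjmem.1
    have c2 : (j:ℝ) ≤ 39 := by exact_mod_cast hjmem.2
    set V := b ω - a ω
    set Y := c ω - d ω
    have hjV : (j:ℝ) * V ≤ (40 - (j:ℝ)) * Y := by
      have : shK j * V = (j:ℝ) * V / (40 - (j:ℝ)) := by rw [shK]; ring
      rw [this, div_le_iff₀ (by linarith)] at hK
      linarith
    have hθ' : θ ≤ (j:ℝ)/40 := by
      have : shQ j = (j:ℝ)/40 := by rw [shQ]
      linarith [this ▸ hθ]
    have hsum : (0:ℝ) < V + Y := by linarith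
    have h5 : θ * (V + Y) ≤ ((j:ℝ)/40) * (V + Y) :=
      mul_le_mul_of_nonneg_right hθ' hsum.le
    have h6 : ((j:ℝ)/40) * (V + Y) ≤ Y := by
      rw [div_mul_eq_mul_div, div_le_iff₀ (by norm_num : (0:ℝ) < 40)]
      nlinarith [hjV]
    have hrw : (a ω + d ω - b ω - c ω) * θ + c ω - d ω = Y - θ * (V + Y) := by
      rw [show V = b ω - a ω from rfl, show Y = c ω - d ω from rfl]; ring
    rw [hrw]
    linarith
  have hdisEU : Disjoint E U := by
    refine Set.disjoint_left.2 ?_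
    intro ω hωE hωU
    have hboth : 0 ≤ (a ω + d ω - b ω - c ω) * θ₁ ω + c ω - d ω ∧
        0 ≤ (a ω + d ω - b ω - c ω) * θ₂ ω + c ω - d ω := by
      rcases hωU with hωI | hωBC
      · exact ⟨hgoodI (θ₁ ω) ω hωI hωI.2.1, hgoodI (θ₂ ω) ω hωI hωI.2.2⟩
      · rcases hωBC with hωB | hωC
        · obtain ⟨j, hj, hωj⟩ := hinUB ω hωB
          exact ⟨hgoodII (θ₁ ω) ω j hj hωj hωj.2.1, hgoodII (θ₂ ω) ω j hj hωj hωj.2.2⟩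
        · obtain ⟨j, hj, hωj⟩ := hinUC ω hωC
          exact ⟨hgoodIII (θ₁ ω) ω j hj hωj hωj.2.1, hgoodIII (θ₂ ω) ω j hj hωj hωj.2.2⟩
    rw [hEdef] at hωE
    rcases hωE with h | h
    · exact absurd hboth.1 (not_le.2 h)
    · exact absurd hboth.2 (not_le.2 h)
  -- conclusion
  have hkey : P E + P U ≤ 1 := by
    rw [← measure_union hdisEU hmU]
    exact prob_le_one
  have hfin : P E ≤ 1 - ENNReal.ofReal (2/5) := by
    exact ENNReal.le_sub_of_add_le_right ENNReal.ofReal_ne_top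
      (le_trans (add_le_add le_rfl hPUge) hkey)
  calc P E ≤ 1 - ENNReal.ofReal (2/5) := hfin
    _ = ENNReal.ofReal 0.6 := by
        rw [← ENNReal.ofReal_one, ← ENNReal.ofReal_sub _ (by norm_num)]
        norm_num
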